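/- For every n ≥ 7, the number of sets of mentions over a sentence of n words, namely 2^{n(n+1)/2}, strictly exceeds the number of possible separator sequences, namely 8^{n+1}; consequently, by pigeonhole, for n ≥ 7 there exist two distinct sets of mentions with the same separator sequence. -/
import Mathlib


inductive Marker | S | E | C
deriving DecidableEq

/-- Separator sequence of a set of mentions (intervals). Gap `k` lies between word `k` and word `k+1`. -/
def sep (M : Set (ℕ × ℕ)) (k : ℕ) : Set Marker :=
  {m | (m = Marker.S ∧ ∃ p ∈ M, p.1 = k + 1) ∨
       (m = Marker.E ∧ ∃ p ∈ M, p.2 = k) ∨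
       (m = Marker.C ∧ ∃ p ∈ M, p.1 ≤ k ∧ k + 1 ≤ p.2)}

/-- `M` is a set of mentions over a sentence of `n` words. -/
def Valid (n : ℕ) (M : Set (ℕ × ℕ)) : Prop :=
  ∀ p ∈ M, 1 ≤ p.1 ∧ p.1 ≤ p.2 ∧ p.2 ≤ n
theorem pigeonhole_collision (n : ℕ) (hn : 7 ≤ n) :
    8 ^ (n + 1) < 2 ^ (n * (n + 1) / 2) ∧
    ∃ M M' : Set (ℕ × ℕ), M.Finite ∧ M'.Finite ∧ Valid n M ∧ Valid n M' ∧
      M ≠ M' ∧ sep M = sep M' := by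
  constructor
  · have h8 : (8:ℕ) = 2 ^ 3 := by norm_num
    rw [h8, ← pow_mul]
    apply Nat.pow_lt_pow_right (by norm_num)
    have h : 2 * (3 * (n + 1) + 1) ≤ n * (n + 1) := by nlinarith
    omega
  · refine ⟨{(1,2),(2,3)}, {(1,3),(2,2)}, ?_, ?_, ?_, ?_, ?_, ?_⟩
    · exact (Set.finite_singleton _).insert _
    · exact (Set.finite_singleton _).insert _
    · rintro p (rfl | rfl) <;> simp <;> omega
    · rintro p (rfl | rfl) <;> simp <;> omega
    · intro h
      have : ((1:ℕ),(2:ℕ)) ∈ ({(1,3),(2,2)} : Set (ℕ × ℕ)) := by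
        rw [← h]; left; rfl
      simp at this
    · funext k
      ext m
      simp only [sep, Set.mem_setOf_eq, Set.mem_insert_iff, Set.mem_singleton_iff]
      rcases m with _ | _ | _ <;> simp <;> omega
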